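/- Let N ≥ 1. For almost every window φ ∈ ℂ^N (with respect to Lebesgue measure) the following holds: for every pair (k,l) such that there exists a nonzero f ∈ ℂ^N with ‖f‖₀ = k and ‖f̂‖₀ = l, there exists a nonzero g ∈ ℂ^N with ‖g‖₀ = k and ‖V_φ g‖₀ = N² − N + l. In other words, F ⊆ F_φ for almost all φ, where F = {(‖f‖₀, ‖f̂‖₀) : f ≠ 0} and F_φ = {(‖g‖₀, ‖V_φ g‖₀ − N² + N) : g ≠ 0}. -/

import Mathlib

open MeasureTheory

/-- The number of nonzero coordinates `‖v‖₀` of a vector. -/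
noncomputable def suppSize {α : Type*} (v : α → ℂ) : ℕ := Nat.card {a // v a ≠ 0}

/-- The (unnormalized) discrete Fourier transform on `ℤ/Nℤ`. -/
noncomputable def dft (N : ℕ) [NeZero N] (f : ZMod N → ℂ) : ZMod N → ℂ :=
  fun k => ∑ g : ZMod N,
    Complex.exp (2 * Real.pi * Complex.I * k.val * g.val / N) * f g

/-- The short-time Fourier transform with window `φ`:
`(V_φ f)(x,ξ) = ∑_g e^{2πiξg/N} φ(g-x) f(g)`. -/
noncomputable def stft (N : ℕ) [NeZero N] (φ f : ZMod N → ℂ) :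
    ZMod N × ZMod N → ℂ :=
  fun p => ∑ g : ZMod N,
    Complex.exp (2 * Real.pi * Complex.I * p.2.val * g.val / N) *
      φ (g - p.1) * f g

lemma null_of_slices_finite {ι : Type*} [Fintype ι] [DecidableEq ι] (i₀ : ι)
    (S : Set (ι → ℂ)) (hS : MeasurableSet S)
    (h : ∀ φ : ι → ℂ, {t : ℂ | Function.update φ i₀ t ∈ S}.Finite) :
    volume S = 0 := by
  classical
  obtain ⟨p, hp⟩ : ∃ p : ι → Prop, p = fun i => i = i₀ := ⟨_, rfl⟩
  haveI hdp : DecidablePred p := fun i => Classical.dec _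
  have hpi₀ : p i₀ := by rw [hp]
  set e := MeasurableEquiv.piEquivPiSubtypeProd (fun _ : ι => ℂ) p with he
  have mp := (volume_preserving_piEquivPiSubtypeProd (fun _ : ι => ℂ) p).symm
  have key : volume (⇑e.symm ⁻¹' S) = volume S := mp.measure_preimage hS.nullMeasurableSet
  rw [← key]
  have hT : MeasurableSet (⇑e.symm ⁻¹' S) := e.symm.measurable hS
  rw [Measure.volume_eq_prod, ← Measure.prod_swap,
    Measure.map_apply measurable_swap hT]
  rw [Measure.measure_prod_null (hT.preimage measurable_swap)]
  refine ae_of_all _ fun x => ?_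
  haveI : NullSingletonClass (volume : Measure ({i // p i} → ℂ)) := by
    constructor
    intro z
    have hz : ({z} : Set ({i // p i} → ℂ)) = Set.pi Set.univ (fun i => {z i}) := by
      ext w; simp [funext_iff, Set.mem_pi]
    rw [hz, volume_pi_pi]
    exact Finset.prod_eq_zero (Finset.mem_univ ⟨i₀, hpi₀⟩) (by simp)
  refine Set.Finite.measure_zero ?_ _
  set φx : ι → ℂ := e.symm ((fun _ => 0), x) with hφx
  have hu : ∀ (y : {i // p i} → ℂ), e.symm (y, x) = Function.update φx i₀ (y ⟨i₀, hpi₀⟩) := by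
    intro y
    funext i
    by_cases hi : p i
    · have hii : i = i₀ := by rw [hp] at hi; exact hi
      subst hii
      have h1 : e.symm (y, x) i = y ⟨i, hi⟩ := by
        simp [he, MeasurableEquiv.piEquivPiSubtypeProd, Equiv.piEquivPiSubtypeProd, hi]
      rw [h1, Function.update_self]
    · have hii : i ≠ i₀ := by rintro rfl; exact hi hpi₀
      have h1 : e.symm (y, x) i = x ⟨i, hi⟩ := by
        simp [he, MeasurableEquiv.piEquivPiSubtypeProd, Equiv.piEquivPiSubtypeProd, hi]
      have h2 : φx i = x ⟨i, hi⟩ := by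
        simp [hφx, he, MeasurableEquiv.piEquivPiSubtypeProd, Equiv.piEquivPiSubtypeProd, hi]
      rw [h1, Function.update_of_ne hii, h2]
  have hset : (Prod.mk x ⁻¹' (Prod.swap ⁻¹' (⇑e.symm ⁻¹' S)))
      = (fun (y : {i // p i} → ℂ) => y ⟨i₀, hpi₀⟩) ⁻¹' {t : ℂ | Function.update φx i₀ t ∈ S} := by
    ext y
    simp only [Set.mem_preimage, Prod.swap_prod_mk, Set.mem_setOf_eq, hu y]
  rw [hset]
  refine Set.Finite.preimage ?_ (h φx)
  intro y _ z _ hyz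
  funext i
  have hii : i = ⟨i₀, hpi₀⟩ := Subtype.ext (cast (congrFun hp ↑i) i.2)
  rw [hii]; exact hyz

lemma slice_finite {N : ℕ} [NeZero N] (c : ZMod N → ℂ) (g₀ : ZMod N) (hc : c g₀ ≠ 0)
    (j : ZMod N) (hj : j ≠ 0) (φ : ZMod N → ℂ) :
    {t : ℂ | (∀ h, Function.update φ g₀ t h ≠ 0) ∧
      (∑ y : ZMod N, c y * Function.update φ g₀ t (y - j) *
        ∏ h ∈ Finset.univ.erase y, Function.update φ g₀ t h) = 0}.Finite := by
  classical
  by_cases hφ : ∀ h, h ≠ g₀ → φ h ≠ 0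
  · set E : ZMod N → Polynomial ℂ := fun h => if h = g₀ then Polynomial.X else Polynomial.C (φ h)
      with hE
    set p : Polynomial ℂ := ∑ y : ZMod N,
        Polynomial.C (c y) * E (y - j) * ∏ h ∈ Finset.univ.erase y, E h with hp
    have heval : ∀ (t : ℂ) (h : ZMod N), (E h).eval t = Function.update φ g₀ t h := by
      intro t h
      by_cases hh : h = g₀ <;> simp [hE, hh, Function.update_apply]
    have hpe : ∀ t : ℂ, p.eval t = ∑ y : ZMod N, c y * Function.update φ g₀ t (y - j) *
        ∏ h ∈ Finset.univ.erase y, Function.update φ g₀ t h := by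
      intro t
      rw [hp, Polynomial.eval_finset_sum]
      refine Finset.sum_congr rfl fun y _ => ?_
      rw [Polynomial.eval_mul, Polynomial.eval_mul, Polynomial.eval_C, Polynomial.eval_prod]
      rw [heval]
      congr 1
      exact Finset.prod_congr rfl fun h _ => heval t h
    have hgj : g₀ - j ≠ g₀ := fun hh => hj (sub_eq_self.mp hh)
    have hp0 : p.eval 0 ≠ 0 := by
      rw [hpe 0, Finset.sum_eq_single g₀]
      · refine mul_ne_zero (mul_ne_zero hc ?_) ?_
        · rw [Function.update_of_ne hgj]
          exact hφ _ hgj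
        · refine Finset.prod_ne_zero_iff.2 fun h hh => ?_
          have hne : h ≠ g₀ := Finset.ne_of_mem_erase hh
          rw [Function.update_of_ne hne]
          exact hφ _ hne
      · intro y _ hy
        refine mul_eq_zero_of_right _ ?_
        refine Finset.prod_eq_zero (Finset.mem_erase.2 ⟨fun hh => hy hh.symm, Finset.mem_univ _⟩)
          ?_
        exact Function.update_self g₀ 0 φ
      · intro hg; exact absurd (Finset.mem_univ g₀) hg
    have hpne : p ≠ 0 := fun h => hp0 (by rw [h]; simp)
    refine Set.Finite.subset (Polynomial.finite_setOf_isRoot hpne) ?_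
    rintro t ⟨_, ht2⟩
    show p.IsRoot t
    rw [Polynomial.IsRoot, hpe]
    exact ht2
  · push_neg at hφ
    obtain ⟨h₀, hne, h0⟩ := hφ
    refine Set.Finite.subset Set.finite_empty ?_
    rintro t ⟨ht1, -⟩
    exact absurd (by rw [Function.update_of_ne hne]; exact h0) (ht1 h₀)

lemma S_null (N : ℕ) [NeZero N] (c : ZMod N → ℂ) (g₀ : ZMod N) (hc : c g₀ ≠ 0)
    (j : ZMod N) (hj : j ≠ 0) :
    volume {φ : ZMod N → ℂ | (∀ h, φ h ≠ 0) ∧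
      (∑ y : ZMod N, c y * φ (y - j) * ∏ h ∈ Finset.univ.erase y, φ h) = 0} = 0 := by
  classical
  refine null_of_slices_finite g₀ _ ?_ (fun φ => slice_finite c g₀ hc j hj φ)
  have h1 : MeasurableSet {φ : ZMod N → ℂ | ∀ h, φ h ≠ 0} := by
    have : {φ : ZMod N → ℂ | ∀ h, φ h ≠ 0} = ⋂ h, (fun φ : ZMod N → ℂ => φ h) ⁻¹' ({0}ᶜ) := by
      ext φ; simp
    rw [this]
    exact MeasurableSet.iInter fun h =>
      (measurable_pi_apply h) (measurableSet_singleton 0).compl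
  have hF : Continuous fun φ : ZMod N → ℂ =>
      ∑ y : ZMod N, c y * φ (y - j) * ∏ h ∈ Finset.univ.erase y, φ h :=
    continuous_finset_sum _ fun y _ =>
      ((continuous_const.mul (continuous_apply (y - j))).mul
        (continuous_finset_prod _ fun h _ => continuous_apply h))
  have h2 : MeasurableSet {φ : ZMod N → ℂ |
      (∑ y : ZMod N, c y * φ (y - j) * ∏ h ∈ Finset.univ.erase y, φ h) = 0} :=
    hF.measurable (measurableSet_singleton 0)
  rw [Set.setOf_and]
  exact h1.inter h2

/-- For almost every window `φ ∈ ℂ^N`: whenever `(k, l)` is realized as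
`(‖f‖₀, ‖f̂‖₀)` for some nonzero `f`, there is a nonzero `g` with `‖g‖₀ = k`
and `‖V_φ g‖₀ = N² - N + l`. In other words `F ⊆ F_φ` for almost all `φ`. -/
theorem uncertainty_pairs_subset_ae (N : ℕ) [NeZero N] :
    ∀ᵐ φ ∂(volume : Measure (ZMod N → ℂ)), ∀ k l : ℕ,
      (∃ f : ZMod N → ℂ, f ≠ 0 ∧ suppSize f = k ∧ suppSize (dft N f) = l) →
      ∃ g : ZMod N → ℂ, g ≠ 0 ∧ suppSize g = k ∧
        suppSize (stft N φ g) = N ^ 2 - N + l := by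
  classical
  refine ae_all_iff.2 fun k => ae_all_iff.2 fun l => ?_
  by_cases hex : ∃ f : ZMod N → ℂ, f ≠ 0 ∧ suppSize f = k ∧ suppSize (dft N f) = l
  · obtain ⟨f, hf0, hfk, hfl⟩ := hex
    obtain ⟨g₀, hg₀⟩ : ∃ x, f x ≠ 0 := by
      by_contra hcon; push_neg at hcon; exact hf0 (funext fun x => hcon x)
    have hA : ∀ᵐ φ ∂(volume : Measure (ZMod N → ℂ)), ∀ h, φ h ≠ 0 := by
      refine ae_all_iff.2 fun h => ?_
      have hnull : volume {φ : ZMod N → ℂ | φ h = 0} = 0 := by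
        refine null_of_slices_finite h _
          ((measurable_pi_apply h) (measurableSet_singleton 0)) fun φ => ?_
        refine Set.Finite.subset (Set.finite_singleton 0) fun t ht => ?_
        simp only [Set.mem_setOf_eq, Function.update_self] at ht
        simp [ht]
      filter_upwards [measure_eq_zero_iff_ae_notMem.1 hnull] with φ hφ
      exact hφ
    have hB : ∀ᵐ φ ∂(volume : Measure (ZMod N → ℂ)), ∀ (j ξ : ZMod N), j ≠ 0 →
        ¬((∀ h, φ h ≠ 0) ∧
          (∑ y : ZMod N, (Complex.exp (2 * Real.pi * Complex.I * ξ.val * y.val / N) * f y) *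
            φ (y - j) * ∏ h ∈ Finset.univ.erase y, φ h) = 0) := by
      refine ae_all_iff.2 fun j => ae_all_iff.2 fun ξ => ?_
      by_cases hj : j = 0
      · exact ae_of_all _ fun φ hne => absurd hj hne
      · have hnull := S_null N
          (fun y => Complex.exp (2 * Real.pi * Complex.I * ξ.val * y.val / N) * f y) g₀
          (mul_ne_zero (Complex.exp_ne_zero _) hg₀) j hj
        filter_upwards [measure_eq_zero_iff_ae_notMem.1 hnull] with φ hφ _
        exact fun hcon => hφ hcon
    filter_upwards [hA, hB] with φ hφ0 hφP _
    set g : ZMod N → ℂ := fun x => f x / φ x with hg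
    have hrel : ∀ (j ξ : ZMod N), (∏ h : ZMod N, φ h) * stft N φ g (j, ξ) =
        ∑ y : ZMod N, (Complex.exp (2 * Real.pi * Complex.I * ξ.val * y.val / N) * f y) *
          φ (y - j) * ∏ h ∈ Finset.univ.erase y, φ h := by
      intro j ξ
      simp only [stft, hg]
      rw [Finset.mul_sum]
      refine Finset.sum_congr rfl fun y _ => ?_
      rw [← Finset.mul_prod_erase Finset.univ φ (Finset.mem_univ y)]
      have hcalc : (φ y * ∏ h ∈ Finset.univ.erase y, φ h) *
          (Complex.exp (2 * Real.pi * Complex.I * ((j, ξ) : ZMod N × ZMod N).2.val * y.val / N) *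
            φ (y - ((j, ξ) : ZMod N × ZMod N).1) * (f y / φ y)) =
          ((Complex.exp (2 * Real.pi * Complex.I * ξ.val * y.val / N) * f y) *
            φ (y - j) * ∏ h ∈ Finset.univ.erase y, φ h) * (φ y / φ y) := by
        ring
      rw [hcalc, div_self (hφ0 y), mul_one]
    have hdft : ∀ ξ : ZMod N, stft N φ g (0, ξ) = dft N f ξ := by
      intro ξ
      simp only [stft, dft, hg]
      refine Finset.sum_congr rfl fun y _ => ?_
      rw [sub_zero]
      have hcalc : Complex.exp (2 * Real.pi * Complex.I *
            (((0 : ZMod N), ξ) : ZMod N × ZMod N).2.val * y.val / N) * φ y * (f y / φ y) =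
          (Complex.exp (2 * Real.pi * Complex.I * ξ.val * y.val / N) * f y) * (φ y / φ y) := by
        ring
      rw [hcalc, div_self (hφ0 y), mul_one]
    have hchar : ∀ p : ZMod N × ZMod N,
        stft N φ g p ≠ 0 ↔ (p.1 ≠ 0 ∨ dft N f p.2 ≠ 0) := by
      rintro ⟨x, ξ⟩
      by_cases hx : x = 0
      · subst hx
        simp [hdft ξ]
      · constructor
        · intro _; exact Or.inl hx
        · intro _ h0
          refine hφP x ξ hx ⟨hφ0, ?_⟩
          rw [← hrel x ξ, h0, mul_zero]
    refine ⟨g, ?_, ?_, ?_⟩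
    · intro h
      have := congrFun h g₀
      simp only [hg, Pi.zero_apply] at this
      rw [div_eq_zero_iff] at this
      rcases this with h1 | h2
      · exact hg₀ h1
      · exact hφ0 g₀ h2
    · rw [← hfk]
      exact Nat.card_congr (Equiv.subtypeEquivRight fun x => by
        simp [hg, div_ne_zero_iff, hφ0 x])
    · have step1 : suppSize (stft N φ g) =
          Nat.card {p : ZMod N × ZMod N // p.1 ≠ 0 ∨ dft N f p.2 ≠ 0} :=
        Nat.card_congr (Equiv.subtypeEquivRight fun p => by rw [hchar p])
      have step2 : Nat.card {p : ZMod N × ZMod N // p.1 ≠ 0 ∨ dft N f p.2 ≠ 0} =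
          Nat.card {p : ZMod N × ZMod N // p.1 ≠ 0 ∨ (p.1 = 0 ∧ dft N f p.2 ≠ 0)} :=
        Nat.card_congr (Equiv.subtypeEquivRight fun p => by tauto)
      have hdisj : Disjoint (fun p : ZMod N × ZMod N => p.1 ≠ 0)
          (fun p : ZMod N × ZMod N => p.1 = 0 ∧ dft N f p.2 ≠ 0) := by
        rw [Pi.disjoint_iff]
        intro p
        rw [Prop.disjoint_iff]
        tauto
      have step3 : Nat.card {p : ZMod N × ZMod N // p.1 ≠ 0 ∨ (p.1 = 0 ∧ dft N f p.2 ≠ 0)} =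
          Nat.card {p : ZMod N × ZMod N // p.1 ≠ 0} +
          Nat.card {p : ZMod N × ZMod N // p.1 = 0 ∧ dft N f p.2 ≠ 0} := by
        rw [Nat.card_congr (subtypeOrEquiv _ _ hdisj), Nat.card_sum]
      have e1 : {p : ZMod N × ZMod N // p.1 ≠ 0} ≃ {x : ZMod N // x ≠ 0} × ZMod N :=
        { toFun := fun p => (⟨p.1.1, p.2⟩, p.1.2)
          invFun := fun q => ⟨(q.1.1, q.2), q.1.2⟩
          left_inv := fun p => rfl
          right_inv := fun q => rfl }
      have count1 : Nat.card {p : ZMod N × ZMod N // p.1 ≠ 0} = (N - 1) * N := by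
        rw [Nat.card_congr e1, Nat.card_prod, Nat.card_zmod]
        congr 1
        rw [Nat.card_eq_fintype_card]
        have : Fintype.card {x : ZMod N // x ≠ 0} =
            Fintype.card (ZMod N) - Fintype.card {x : ZMod N // x = 0} :=
          Fintype.card_subtype_compl _
        rw [this, Fintype.card_subtype_eq, ZMod.card]
      have e2 : {p : ZMod N × ZMod N // p.1 = 0 ∧ dft N f p.2 ≠ 0} ≃
          {ξ : ZMod N // dft N f ξ ≠ 0} :=
        { toFun := fun p => ⟨p.1.2, p.2.2⟩
          invFun := fun ξ => ⟨(0, ξ.1), rfl, ξ.2⟩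
          left_inv := fun p => by
            obtain ⟨⟨a, b⟩, ⟨h1, h2⟩⟩ := p
            simp only [Subtype.mk.injEq, Prod.mk.injEq]
            exact ⟨h1.symm, trivial⟩
          right_inv := fun ξ => rfl }
      have count2 : Nat.card {p : ZMod N × ZMod N // p.1 = 0 ∧ dft N f p.2 ≠ 0} = l := by
        rw [Nat.card_congr e2]
        exact hfl
      rw [step1, step2, step3, count1, count2, Nat.sub_mul, one_mul,
        show N * N = N ^ 2 from (pow_two N).symm]
  · exact ae_of_all _ fun φ h => absurd h hex
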